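/- Let (X,d) be a compact metric space and f : X → X a continuous map. Then the set Per(f) of periodic points of f and the nonwandering set Ω(f) of f are both contained in the global attractor X_f := ⋂_{n≥1} f^n(X). (Here x is nonwandering if for every open neighborhood U of x there exists k ≥ 1 with f^k(U) ∩ U ≠ ∅.) -/
import Mathlib

/-- A periodic point lies in every `f^[n+1] '' univ`. -/
lemma periodic_mem_image {X : Type*} (f : X → X) {x : X} {k : ℕ} (hk : 1 ≤ k)
    (hx : f^[k] x = x) (n : ℕ) : x ∈ f^[n + 1] '' Set.univ := by
  have h : f^[k * (n + 1)] x = x := by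
    rw [Function.iterate_mul]
    exact Function.iterate_fixed hx (n + 1)
  have hle : n + 1 ≤ k * (n + 1) := Nat.le_mul_of_pos_left _ hk
  refine ⟨f^[k * (n + 1) - (n + 1)] x, trivial, ?_⟩
  rw [← Function.iterate_add_apply, Nat.add_sub_cancel' hle]
  exact h

/-- For a continuous map `f` of a compact metric space `X`, the set of
periodic points and the nonwandering set are contained in the global attractor
`X_f = ⋂_{n ≥ 1} f^n(X)`. -/
theorem periodic_and_nonwandering_subset_attractor {X : Type*} [MetricSpace X]
    [CompactSpace X] (f : X → X) (hf : Continuous f) :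
    (∀ x : X, (∃ k : ℕ, 1 ≤ k ∧ f^[k] x = x) → x ∈ ⋂ n : ℕ, f^[n + 1] '' Set.univ) ∧
    (∀ x : X, (∀ U : Set X, IsOpen U → x ∈ U → ∃ k : ℕ, 1 ≤ k ∧ (f^[k] '' U ∩ U).Nonempty) →
      x ∈ ⋂ n : ℕ, f^[n + 1] '' Set.univ) := by
  constructor
  · rintro x ⟨k, hk, hx⟩
    exact Set.mem_iInter.2 fun n => periodic_mem_image f hk hx n
  · intro x hx
    by_cases hper : ∃ k : ℕ, 1 ≤ k ∧ f^[k] x = x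
    · obtain ⟨k, hk, hkx⟩ := hper
      exact Set.mem_iInter.2 fun n => periodic_mem_image f hk hkx n
    push_neg at hper
    refine Set.mem_iInter.2 fun n => ?_
    by_contra hxK
    set K : Set X := f^[n + 1] '' Set.univ with hK
    have hKcl : IsClosed K :=
      (isCompact_univ.image (hf.iterate (n + 1))).isClosed
    have hxKc : x ∈ Kᶜ := hxK
    obtain ⟨ε, hε, hball⟩ := Metric.isOpen_iff.1 hKcl.isOpen_compl x hxKc
    -- half distances to the iterates
    set c : ℕ → ℝ := fun k => dist (f^[k] x) x / 2 with hc
    have hcpos : ∀ k ∈ Finset.Icc 1 n, 0 < c k := by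
      intro k hkmem
      have h1 : 1 ≤ k := (Finset.mem_Icc.1 hkmem).1
      have hne : f^[k] x ≠ x := hper k h1
      have : 0 < dist (f^[k] x) x := dist_pos.2 hne
      simpa [hc] using half_pos this
    set U : Set X := Metric.ball x ε ∩
        ⋂ k ∈ Finset.Icc 1 n, (Metric.ball x (c k) ∩ {y | c k < dist (f^[k] y) x}) with hU
    have hUopen : IsOpen U := by
      refine IsOpen.inter Metric.isOpen_ball ?_
      refine isOpen_biInter_finset fun k _ => ?_
      refine IsOpen.inter Metric.isOpen_ball ?_
      have hcont : Continuous fun y => dist (f^[k] y) x := (hf.iterate k).dist continuous_const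
      exact isOpen_lt continuous_const hcont
    have hxU : x ∈ U := by
      refine ⟨Metric.mem_ball_self hε, ?_⟩
      refine Set.mem_iInter₂.2 fun k hkmem => ?_
      have hck := hcpos k hkmem
      refine ⟨Metric.mem_ball_self hck, ?_⟩
      have h1 : 1 ≤ k := (Finset.mem_Icc.1 hkmem).1
      have hne : f^[k] x ≠ x := hper k h1
      have hd : 0 < dist (f^[k] x) x := dist_pos.2 hne
      show c k < dist (f^[k] x) x
      rw [hc]
      linarith
    obtain ⟨m, hm, z, ⟨y, hyU, hyz⟩, hzU⟩ := hx U hUopen hxU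
    by_cases hmn : m ≤ n
    · -- small return time: contradiction with the separating sets
      have hmmem : m ∈ Finset.Icc 1 n := Finset.mem_Icc.2 ⟨hm, hmn⟩
      have hy2 := (Set.mem_iInter₂.1 hyU.2 m hmmem).2
      have hz2 := (Set.mem_iInter₂.1 hzU.2 m hmmem).1
      -- hy2 : c m < dist (f^[m] y) x ; hz2 : z ∈ ball x (c m), z = f^[m] y
      have hy2' : c m < dist (f^[m] y) x := hy2
      rw [hyz] at hy2'
      have : dist z x < c m := Metric.mem_ball.1 hz2
      exact absurd hy2' (not_lt.2 this.le)
    · -- large return time: z ∈ K, but z ∈ ball x ε ⊆ Kᶜ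
      push_neg at hmn
      have hle : n + 1 ≤ m := hmn
      have hzK : z ∈ K := by
        refine ⟨f^[m - (n + 1)] y, trivial, ?_⟩
        rw [← Function.iterate_add_apply, Nat.add_sub_cancel' hle]
        exact hyz
      exact hball hzU.1 hzK
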